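/- If G is connected, then for all vertices i, j the accumulated flow h t i j converges to a finite limit h∞ i j as t → ∞. -/

import Mathlib

open Finset Filter Topology

section Helpers
set_option linter.unusedSectionVars false
variable {ι : Type*} [Fintype ι] [DecidableEq ι]

lemma aux_mul_nonneg (P Q : Matrix ι ι ℝ) (hP : ∀ i j, 0 ≤ P i j) (hQ : ∀ i j, 0 ≤ Q i j) :
    ∀ i j, 0 ≤ (P * Q) i j := fun i j => by
  rw [Matrix.mul_apply]
  exact Finset.sum_nonneg fun k _ => mul_nonneg (hP i k) (hQ k j)

lemma aux_mul_rowsum (P Q : Matrix ι ι ℝ) (hP : ∀ i, ∑ j, P i j = 1)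
    (hQ : ∀ i, ∑ j, Q i j = 1) : ∀ i, ∑ j, (P * Q) i j = 1 := fun i => by
  simp only [Matrix.mul_apply]
  rw [Finset.sum_comm]
  simp [← Finset.mul_sum, hQ, hP]

lemma aux_mul_entry_le (P Q : Matrix ι ι ℝ) (hP : ∀ i j, 0 ≤ P i j) (hQ : ∀ i j, 0 ≤ Q i j)
    (i k j : ι) : P i k * Q k j ≤ (P * Q) i j := by
  rw [Matrix.mul_apply]
  exact Finset.single_le_sum (fun l _ => mul_nonneg (hP i l) (hQ l j)) (mem_univ k)

variable [Nonempty ι]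

lemma aux_upper (P : Matrix ι ι ℝ) (δ : ℝ)
    (hP : ∀ i j, δ ≤ P i j) (hnn : ∀ i j, 0 ≤ P i j) (hrow : ∀ i, ∑ j, P i j = 1)
    (v : ι → ℝ) (i : ι) :
    P.mulVec v i ≤ univ.sup' univ_nonempty v
      - δ * (univ.sup' univ_nonempty v - univ.inf' univ_nonempty v) := by
  set M := univ.sup' univ_nonempty v with hM
  set m := univ.inf' univ_nonempty v with hm
  obtain ⟨j0, -, hj0⟩ := Finset.exists_mem_eq_inf' (univ_nonempty (α := ι)) v
  have hvM : ∀ j, v j ≤ M := fun j => Finset.le_sup' v (mem_univ j)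
  have hmv : ∀ j, m ≤ v j := fun j => Finset.inf'_le v (mem_univ j)
  have key : P.mulVec v i ≤ P i j0 * v j0 + (1 - P i j0) * M := by
    rw [Matrix.mulVec, dotProduct]
    rw [← Finset.add_sum_erase univ (fun j => P i j * v j) (mem_univ j0)]
    have h1 : ∑ j ∈ univ.erase j0, P i j * v j ≤ ∑ j ∈ univ.erase j0, P i j * M :=
      Finset.sum_le_sum fun j _ => mul_le_mul_of_nonneg_left (hvM j) (hnn i j)
    have h2 : ∑ j ∈ univ.erase j0, P i j = 1 - P i j0 := by
      have := Finset.add_sum_erase univ (fun j => P i j) (mem_univ j0)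
      rw [hrow i] at this
      linarith
    calc P i j0 * v j0 + ∑ j ∈ univ.erase j0, P i j * v j
        ≤ P i j0 * v j0 + ∑ j ∈ univ.erase j0, P i j * M := by linarith
      _ = P i j0 * v j0 + (1 - P i j0) * M := by rw [← Finset.sum_mul, h2]
  have hmM : m ≤ M := (hmv j0).trans (hvM j0)
  have heq : P i j0 * v j0 + (1 - P i j0) * M = M - P i j0 * (M - v j0) := by ring
  rw [heq] at key
  have h3 : δ * (M - m) ≤ P i j0 * (M - v j0) := by
    rw [← hj0]
    exact mul_le_mul_of_nonneg_right (hP i j0) (by linarith)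
  linarith

lemma aux_lower (P : Matrix ι ι ℝ) (hnn : ∀ i j, 0 ≤ P i j) (hrow : ∀ i, ∑ j, P i j = 1)
    (v : ι → ℝ) (i : ι) : univ.inf' univ_nonempty v ≤ P.mulVec v i := by
  rw [Matrix.mulVec, dotProduct]
  calc univ.inf' univ_nonempty v = ∑ j, P i j * univ.inf' univ_nonempty v := by
        rw [← Finset.sum_mul, hrow i, one_mul]
    _ ≤ ∑ j, P i j * v j :=
        Finset.sum_le_sum fun j _ => mul_le_mul_of_nonneg_left
          (Finset.inf'_le v (mem_univ j)) (hnn i j)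

lemma aux_osc (P : Matrix ι ι ℝ) (δ : ℝ)
    (hP : ∀ i j, δ ≤ P i j) (hnn : ∀ i j, 0 ≤ P i j) (hrow : ∀ i, ∑ j, P i j = 1)
    (v : ι → ℝ) :
    univ.sup' univ_nonempty (P.mulVec v) - univ.inf' univ_nonempty (P.mulVec v)
      ≤ (1 - δ) * (univ.sup' univ_nonempty v - univ.inf' univ_nonempty v) := by
  have h1 : univ.sup' univ_nonempty (P.mulVec v) ≤ univ.sup' univ_nonempty v
      - δ * (univ.sup' univ_nonempty v - univ.inf' univ_nonempty v) :=
    Finset.sup'_le _ _ fun i _ => aux_upper P δ hP hnn hrow v i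
  have h2 : univ.inf' univ_nonempty v ≤ univ.inf' univ_nonempty (P.mulVec v) :=
    Finset.le_inf' _ _ fun i _ => aux_lower P hnn hrow v i
  nlinarith [h1, h2]

lemma aux_osc_nonneg (v : ι → ℝ) :
    0 ≤ univ.sup' univ_nonempty v - univ.inf' univ_nonempty v := by
  obtain ⟨i⟩ := ‹Nonempty ι›
  have := Finset.inf'_le v (mem_univ i)
  have := Finset.le_sup' v (mem_univ i)
  linarith

end Helpers

theorem stmt14 (n : ℕ) (hn : 1 ≤ n) (G : SimpleGraph (Fin n)) [DecidableRel G.Adj]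
    (W : Matrix (Fin n) (Fin n) ℝ)
    (hW : ∀ i j, W i j =
      if G.Adj i j then 1 / (1 + (max (G.degree i) (G.degree j) : ℝ))
      else if i = j then
        1 - ∑ k ∈ G.neighborFinset i, 1 / (1 + (max (G.degree i) (G.degree k) : ℝ))
      else 0)
    (a : Fin n → Fin n → ℝ)
    (ha : ∀ i j, a i j =
      if G.Adj i j then 1 / (1 + (max (G.degree i) (G.degree j) : ℝ)) else 0)
    (hG : G.Connected)
    (g0 : Fin n → ℝ)
    (h : ℕ → Fin n → Fin n → ℝ)
    (hzero : ∀ i j, h 0 i j = 0)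
    (hrec : ∀ t i j, h (t + 1) i j =
      h t i j + a i j * (((W ^ t).mulVec g0) j - ((W ^ t).mulVec g0) i)) :
    ∀ i j, ∃ L : ℝ, Tendsto (fun t => h t i j) atTop (𝓝 L) := by
  haveI : Nonempty (Fin n) := Fin.pos_iff_nonempty.mp hn
  -- diagonal entries are positive
  have hdiagpos : ∀ i, 0 < W i i := by
    intro i
    rw [hW i i, if_neg (G.irrefl), if_pos rfl]
    have hterm : ∀ k ∈ G.neighborFinset i,
        1 / (1 + (max (G.degree i) (G.degree k) : ℝ)) ≤ 1 / (1 + (G.degree i : ℝ)) := by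
      intro k _
      apply one_div_le_one_div_of_le (by positivity)
      have : (G.degree i : ℝ) ≤ max (G.degree i : ℝ) (G.degree k : ℝ) := le_max_left _ _
      linarith
    have hsum := Finset.sum_le_card_nsmul _ _ _ hterm
    rw [SimpleGraph.card_neighborFinset_eq_degree, nsmul_eq_mul] at hsum
    have hlt : (G.degree i : ℝ) * (1 / (1 + (G.degree i : ℝ))) < 1 := by
      rw [mul_one_div, div_lt_one (by positivity)]
      linarith
    linarith
  have hadjpos : ∀ i j, G.Adj i j → 0 < W i j := by
    intro i j hadj
    rw [hW i j, if_pos hadj]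
    positivity
  have hWnn : ∀ i j, 0 ≤ W i j := by
    intro i j
    by_cases hadj : G.Adj i j
    · exact (hadjpos i j hadj).le
    by_cases hij : i = j
    · subst hij; exact (hdiagpos i).le
    · rw [hW i j, if_neg hadj, if_neg hij]
  -- rows sum to one
  have hWrow : ∀ i, ∑ j, W i j = 1 := by
    intro i
    rw [← Finset.add_sum_erase univ (fun j => W i j) (mem_univ i)]
    have h1 : ∑ j ∈ univ.erase i, W i j
        = ∑ j ∈ univ.erase i, (if G.Adj i j then 1 / (1 + (max (G.degree i) (G.degree j) : ℝ)) else 0) := by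
      apply Finset.sum_congr rfl
      intro j hj
      rw [hW i j]
      rcases Finset.mem_erase.mp hj with ⟨hne, -⟩
      by_cases hadj : G.Adj i j
      · rw [if_pos hadj, if_pos hadj]
      · rw [if_neg hadj, if_neg hadj, if_neg (fun hh => hne hh.symm)]
    have h2 : ∑ j ∈ univ.erase i, (if G.Adj i j then 1 / (1 + (max (G.degree i) (G.degree j) : ℝ)) else 0)
        = ∑ j, (if G.Adj i j then 1 / (1 + (max (G.degree i) (G.degree j) : ℝ)) else 0) :=
      Finset.sum_erase _ (by rw [if_neg (G.irrefl)])
    have h3 : ∑ j, (if G.Adj i j then 1 / (1 + (max (G.degree i) (G.degree j) : ℝ)) else 0)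
        = ∑ k ∈ G.neighborFinset i, 1 / (1 + (max (G.degree i) (G.degree k) : ℝ)) := by
      rw [← Finset.sum_filter]
      congr 1
      ext k
      simp [SimpleGraph.mem_neighborFinset]
    rw [h1, h2, h3, hW i i, if_neg (G.irrefl), if_pos rfl]
    ring
  -- powers are stochastic
  have hpnn : ∀ m, ∀ i j, 0 ≤ (W ^ m) i j := by
    intro m
    induction m with
    | zero => intro i j; rw [pow_zero, Matrix.one_apply]; split <;> norm_num
    | succ m ih => intro i j; rw [pow_succ]; exact aux_mul_nonneg _ _ ih hWnn i j
  have hprow : ∀ m, ∀ i, ∑ j, (W ^ m) i j = 1 := by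
    intro m
    induction m with
    | zero => intro i; simp [Matrix.one_apply]
    | succ m ih => intro i; rw [pow_succ]; exact aux_mul_rowsum _ _ ih hWrow i
  have hentry_le : ∀ (s t : ℕ) (i k j : Fin n),
      (W ^ s) i k * (W ^ t) k j ≤ (W ^ (s + t)) i j := by
    intro s t i k j
    rw [pow_add]
    exact aux_mul_entry_le _ _ (hpnn s) (hpnn t) i k j
  -- walk positivity
  have hwalk : ∀ (i j : Fin n) (p : G.Walk i j), 0 < (W ^ p.length) i j := by
    intro i j p
    induction p with
    | nil => simp [Matrix.one_apply]
    | @cons u v w hadj q ih =>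
      rw [SimpleGraph.Walk.length_cons]
      have h1 : 0 < W u v * (W ^ q.length) v w := mul_pos (hadjpos _ _ hadj) ih
      have h2 := hentry_le 1 q.length u v w
      rw [pow_one] at h2
      have h3 : 0 < (W ^ (1 + q.length)) u w := lt_of_lt_of_le h1 h2
      rwa [Nat.add_comm] at h3
  have hpad : ∀ (m : ℕ) (i j : Fin n), 0 < (W ^ m) i j → ∀ k, 0 < (W ^ (m + k)) i j := by
    intro m i j hpos k
    induction k with
    | zero => simpa using hpos
    | succ k ih =>
      have h2 := hentry_le (m + k) 1 i j j
      rw [pow_one] at h2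
      exact lt_of_lt_of_le (mul_pos ih (hdiagpos j)) h2
  have hposn : ∀ i j, 0 < (W ^ n) i j := by
    intro i j
    obtain ⟨w⟩ := hG.preconnected i j
    have hlen : (w.toPath : G.Walk i j).length < n := by
      have := (w.toPath.2).length_lt
      simpa using this
    have h0 := hwalk i j w.toPath.1
    have h1 := hpad _ i j h0 (n - (w.toPath.1.length))
    rwa [Nat.add_sub_cancel' hlen.le] at h1
  -- the spectral-gap-like parameter
  set δ : ℝ := univ.inf' univ_nonempty (fun p : Fin n × Fin n => (W ^ n) p.1 p.2) with hδdef
  have hδpos : 0 < δ := by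
    rw [hδdef, Finset.lt_inf'_iff]
    exact fun p _ => hposn p.1 p.2
  have hδle : ∀ i j, δ ≤ (W ^ n) i j := fun i j =>
    Finset.inf'_le _ (mem_univ (i, j))
  have hδ1 : δ ≤ 1 := by
    obtain ⟨i0⟩ := (inferInstance : Nonempty (Fin n))
    have h1 : δ ≤ (W ^ n) i0 i0 := hδle i0 i0
    have h2 : (W ^ n) i0 i0 ≤ ∑ j, (W ^ n) i0 j :=
      Finset.single_le_sum (fun j _ => hpnn n i0 j) (mem_univ i0)
    rw [hprow n i0] at h2
    linarith
  -- contraction along powers of W^n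
  have hcontract : ∀ (q : ℕ) (v : Fin n → ℝ),
      univ.sup' univ_nonempty (((W ^ n) ^ q).mulVec v) - univ.inf' univ_nonempty (((W ^ n) ^ q).mulVec v)
        ≤ (1 - δ) ^ q * (univ.sup' univ_nonempty v - univ.inf' univ_nonempty v) := by
    intro q
    induction q with
    | zero => intro v; simp [Matrix.one_mulVec]
    | succ q ih =>
      intro v
      have e : ((W ^ n) ^ (q + 1)).mulVec v = (W ^ n).mulVec (((W ^ n) ^ q).mulVec v) := by
        rw [Matrix.mulVec_mulVec, ← pow_succ']
      rw [e]
      have h1 := aux_osc (W ^ n) δ hδle (hpnn n) (hprow n) (((W ^ n) ^ q).mulVec v)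
      have h3 : (0:ℝ) ≤ 1 - δ := by linarith
      calc univ.sup' univ_nonempty ((W ^ n).mulVec (((W ^ n) ^ q).mulVec v))
            - univ.inf' univ_nonempty ((W ^ n).mulVec (((W ^ n) ^ q).mulVec v))
          ≤ (1 - δ) * (univ.sup' univ_nonempty (((W ^ n) ^ q).mulVec v)
              - univ.inf' univ_nonempty (((W ^ n) ^ q).mulVec v)) := h1
        _ ≤ (1 - δ) * ((1 - δ) ^ q * (univ.sup' univ_nonempty v - univ.inf' univ_nonempty v)) :=
            mul_le_mul_of_nonneg_left (ih v) h3
        _ = (1 - δ) ^ (q + 1) * (univ.sup' univ_nonempty v - univ.inf' univ_nonempty v) := by ring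
  -- monotonicity of oscillation
  have hmono : ∀ (s : ℕ) (v : Fin n → ℝ),
      univ.sup' univ_nonempty ((W ^ s).mulVec v) - univ.inf' univ_nonempty ((W ^ s).mulVec v)
        ≤ univ.sup' univ_nonempty v - univ.inf' univ_nonempty v := by
    intro s
    induction s with
    | zero => intro v; simp [Matrix.one_mulVec]
    | succ s ih =>
      intro v
      have e : (W ^ (s + 1)).mulVec v = W.mulVec ((W ^ s).mulVec v) := by
        rw [Matrix.mulVec_mulVec, ← pow_succ']
      rw [e]
      have h1 := aux_osc W 0 hWnn hWnn hWrow ((W ^ s).mulVec v)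
      rw [sub_zero, one_mul] at h1
      exact h1.trans (ih v)
  -- oscillation decay
  have hosc : ∀ t : ℕ,
      univ.sup' univ_nonempty ((W ^ t).mulVec g0) - univ.inf' univ_nonempty ((W ^ t).mulVec g0)
        ≤ (1 - δ) ^ (t / n) * (univ.sup' univ_nonempty g0 - univ.inf' univ_nonempty g0) := by
    intro t
    have e : (W ^ t).mulVec g0 = (W ^ (t % n)).mulVec (((W ^ n) ^ (t / n)).mulVec g0) := by
      rw [Matrix.mulVec_mulVec, ← pow_mul, ← pow_add, Nat.mod_add_div]
    rw [e]
    exact (hmono (t % n) _).trans (hcontract (t / n) g0)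
  -- final assembly
  intro i j
  set C : ℝ := |a i j| * (univ.sup' univ_nonempty g0 - univ.inf' univ_nonempty g0) with hC
  have hC0 : 0 ≤ C := mul_nonneg (abs_nonneg _) (aux_osc_nonneg g0)
  set f : ℕ → ℝ := fun t => a i j * (((W ^ t).mulVec g0) j - ((W ^ t).mulVec g0) i) with hf
  have hpart : ∀ t, h t i j = ∑ s ∈ Finset.range t, f s := by
    intro t
    induction t with
    | zero => simp [hzero]
    | succ t ih => rw [hrec t i j, Finset.sum_range_succ, ih]
  have hbound : ∀ t, |f t| ≤ C * (1 - δ) ^ (t / n) := by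
    intro t
    have hd : |((W ^ t).mulVec g0) j - ((W ^ t).mulVec g0) i|
        ≤ univ.sup' univ_nonempty ((W ^ t).mulVec g0) - univ.inf' univ_nonempty ((W ^ t).mulVec g0) := by
      have h1 := Finset.le_sup' ((W ^ t).mulVec g0) (mem_univ j)
      have h2 := Finset.inf'_le ((W ^ t).mulVec g0) (mem_univ j)
      have h3 := Finset.le_sup' ((W ^ t).mulVec g0) (mem_univ i)
      have h4 := Finset.inf'_le ((W ^ t).mulVec g0) (mem_univ i)
      rw [abs_sub_le_iff]
      constructor <;> linarith
    calc |f t| = |a i j| * |((W ^ t).mulVec g0) j - ((W ^ t).mulVec g0) i| := abs_mul _ _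
      _ ≤ |a i j| * ((univ.sup' univ_nonempty ((W ^ t).mulVec g0) - univ.inf' univ_nonempty ((W ^ t).mulVec g0))) :=
          mul_le_mul_of_nonneg_left hd (abs_nonneg _)
      _ ≤ |a i j| * ((1 - δ) ^ (t / n) * (univ.sup' univ_nonempty g0 - univ.inf' univ_nonempty g0)) :=
          mul_le_mul_of_nonneg_left (hosc t) (abs_nonneg _)
      _ = C * (1 - δ) ^ (t / n) := by rw [hC]; ring
  -- geometric domination
  set r : ℝ := max (1 - δ) (1 / 2) with hr
  have hr0 : (0:ℝ) < r := lt_of_lt_of_le (by norm_num) (le_max_right _ _)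
  have hr1 : r < 1 := max_lt (by linarith) (by norm_num)
  set ρ : ℝ := r ^ ((1:ℝ) / n) with hρ
  have hρ0 : 0 ≤ ρ := Real.rpow_nonneg hr0.le _
  have hρ1 : ρ < 1 := Real.rpow_lt_one hr0.le hr1 (by positivity)
  have hnR : (0:ℝ) < (n:ℝ) := by exact_mod_cast hn
  have hkey : ∀ t : ℕ, r ^ (t / n) ≤ ρ ^ t / r := by
    intro t
    have hmod : t < n * (t / n) + n := by
      have h0 := Nat.mod_lt t (show 0 < n from hn)
      have h1 := Nat.div_add_mod t n
      omega
    have h1 : (t:ℝ) / n - 1 ≤ ((t / n : ℕ) : ℝ) := by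
      have h2 : (t:ℝ) < n * ((t / n : ℕ) : ℝ) + n := by exact_mod_cast hmod
      rw [div_sub_one hnR.ne', div_le_iff₀ hnR]
      nlinarith
    calc r ^ (t / n) = r ^ (((t / n : ℕ) : ℝ)) := (Real.rpow_natCast r _).symm
      _ ≤ r ^ ((t:ℝ) / n - 1) := Real.rpow_le_rpow_of_exponent_ge hr0 hr1.le h1
      _ = ρ ^ t / r := by
          rw [Real.rpow_sub hr0, Real.rpow_one]
          congr 1
          rw [← Real.rpow_natCast ρ t, hρ, ← Real.rpow_mul hr0.le]
          congr 1
          field_simp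
  have hgs : Summable (fun t : ℕ => (C / r) * ρ ^ t) :=
    (summable_geometric_of_lt_one hρ0 hρ1).mul_left _
  have hsummable : Summable f := by
    apply Summable.of_norm_bounded hgs
    intro t
    rw [Real.norm_eq_abs]
    calc |f t| ≤ C * (1 - δ) ^ (t / n) := hbound t
      _ ≤ C * r ^ (t / n) := by
          apply mul_le_mul_of_nonneg_left _ hC0
          exact pow_le_pow_left₀ (by linarith) (le_max_left _ _) _
      _ ≤ C * (ρ ^ t / r) := mul_le_mul_of_nonneg_left (hkey t) hC0
      _ = (C / r) * ρ ^ t := by ring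
  exact ⟨∑' t, f t, (hsummable.hasSum.tendsto_sum_nat).congr fun t => (hpart t).symm⟩
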